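/- For every z ∈ ℂ ∖ ℝ_{≥0} one has log(1−z) − log(1−1/z) = log(−z), where log denotes the principal branch of the complex logarithm (branch cut along (−∞,0]). Equivalently, −Li_1(z) + Li_1(1/z) = 𝓑_1(z), i.e., the weight-one case of the explicit parity theorem. -/

import Mathlib

/-- `ℝ_{≥0}` viewed inside `ℂ`. -/
def nnRealC : Set ℂ := {w | ∃ r : ℝ, 0 ≤ r ∧ w = (r : ℂ)}

/-- Weight-one case of the explicit parity theorem:
for `z ∈ ℂ ∖ ℝ_{≥0}`, `log(1-z) - log(1-1/z) = log(-z)`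
(principal branch), i.e. `-Li₁(z) + Li₁(1/z) = 𝓑₁(z)`. -/
theorem log_one_sub_sub_log_one_sub_inv (z : ℂ) (hz : z ∉ nnRealC) :
    Complex.log (1 - z) - Complex.log (1 - z⁻¹) = Complex.log (-z) := by
  have hz0 : z ≠ 0 := by
    rintro rfl; exact hz ⟨0, le_refl 0, by simp⟩
  have hneg : -z ≠ 0 := neg_ne_zero.mpr hz0
  have hinv : (1 : ℂ) - z⁻¹ ≠ 0 := by
    intro h
    have : z = 1 := by
      field_simp at h
      exact sub_eq_zero.mp (by simpa using h)
    exact hz ⟨1, zero_le_one, by simp [this]⟩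
  have him : (1 - z⁻¹).im = z.im / Complex.normSq z := by
    rw [Complex.sub_im, Complex.inv_im]
    simp [neg_div]
  have hnz : (0:ℝ) < Complex.normSq z := Complex.normSq_pos.mpr hz0
  have harg : Complex.arg (-z) + Complex.arg (1 - z⁻¹) ∈ Set.Ioc (-Real.pi) Real.pi := by
    rcases lt_trichotomy z.im 0 with h | h | h
    · -- arg(-z) ≥ 0 (im > 0), arg(1-z⁻¹) < 0
      have h1 : 0 ≤ Complex.arg (-z) := Complex.arg_nonneg_iff.mpr (by simp; linarith)
      have h2 : Complex.arg (1 - z⁻¹) < 0 := Complex.arg_neg_iff.mpr (by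
        rw [him]; exact div_neg_of_neg_of_pos h hnz)
      constructor
      · have := Complex.neg_pi_lt_arg (1 - z⁻¹); linarith
      · have := Complex.arg_le_pi (-z); linarith
    · -- z real, negative
      have hre : z.re < 0 := by
        rcases lt_trichotomy z.re 0 with h' | h' | h'
        · exact h'
        · exact absurd hz0 (by simp [Complex.ext_iff, h, h'])
        · exact absurd (hz ⟨z.re, h'.le, by simp [Complex.ext_iff, h]⟩) (by simp)
      have h1 : Complex.arg (-z) = 0 := Complex.arg_eq_zero_iff.mpr (by
        simp [h]; linarith)
      have h2 : Complex.arg (1 - z⁻¹) = 0 := Complex.arg_eq_zero_iff.mpr (by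
        constructor
        · have hd : z.re / Complex.normSq z ≤ 0 :=
            div_nonpos_of_nonpos_of_nonneg hre.le hnz.le
          rw [Complex.sub_re, Complex.inv_re, Complex.one_re]; linarith
        · rw [him, h]; simp)
      rw [h1, h2]
      simp only [add_zero]
      exact ⟨by linarith [Real.pi_pos], Real.pi_pos.le⟩
    · -- arg(-z) < 0, arg(1-z⁻¹) ≥ 0
      have h1 : Complex.arg (-z) < 0 := Complex.arg_neg_iff.mpr (by simp; linarith)
      have h2 : 0 ≤ Complex.arg (1 - z⁻¹) := Complex.arg_nonneg_iff.mpr (by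
        rw [him]; positivity)
      constructor
      · have := Complex.neg_pi_lt_arg (-z); linarith
      · have := Complex.arg_le_pi (1 - z⁻¹); linarith
  have hmul : (1 : ℂ) - z = (-z) * (1 - z⁻¹) := by
    field_simp; ring
  rw [hmul, Complex.log_mul hneg hinv harg]
  ring
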